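/- Let α1, α2 ∈ [0,1] with α1 + α2 = 1 and βi = √(αi(1−αi)), and define ρ1 = [[1,0],[0,0]] ⊗ [[1,0],[0,0]] and ρ2 = [[1−α1, β1],[β1, α1]] ⊗ [[1−α2, β2],[β2, α2]] on ℂ² ⊗ ℂ². Let T1 = (1/2)[[1,0,0,−1],[0,0,0,0],[0,0,0,0],[−1,0,0,1]] and T2 = (1/2)[[0,0,0,0],[0,1,1,0],[0,1,1,0],[0,0,0,0]] (indices ordered (0,0),(0,1),(1,0),(1,1)). Then (T1+Γ(T1)) + (T2+Γ(T2)) = 1 (identity), T1+Γ(T1) and T2+Γ(T2) lie in SEP*, and Tr((T1+Γ(T1)) ρ1) = Tr((T2+Γ(T2)) ρ2) = 1 while Tr((T2+Γ(T2)) ρ1) = Tr((T1+Γ(T1)) ρ2) = 0. -/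

import Mathlib

open Matrix Kronecker ComplexOrder

noncomputable section

abbrev Mat (dA dB : ℕ) := Matrix (Fin dA × Fin dB) (Fin dA × Fin dB) ℂ

/-- Membership in the dual cone SEP*. -/
def InSEPDual {dA dB : ℕ} (M : Mat dA dB) : Prop :=
  M.IsHermitian ∧ ∀ (A : Matrix (Fin dA) (Fin dA) ℂ) (B : Matrix (Fin dB) (Fin dB) ℂ),
    A.PosSemidef → B.PosSemidef → 0 ≤ ((A ⊗ₖ B) * M).trace

/-- Partial transpose on the second factor. -/
def ptB {dA dB : ℕ} (X : Mat dA dB) : Mat dA dB :=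
  Matrix.of fun p q => X (p.1, q.2) (q.1, p.2)

/-- The index identification `(a,b) ↦ 2a + b` of `Fin 2 × Fin 2` with `Fin 4`,
ordering the indices as (0,0),(0,1),(1,0),(1,1). -/
def idx4 : Fin 2 × Fin 2 → Fin 4 :=
  fun p => ⟨2 * p.1.val + p.2.val, by have := p.1.isLt; have := p.2.isLt; omega⟩

/-- View a `4×4` matrix as a matrix indexed by `Fin 2 × Fin 2` (in the order
(0,0),(0,1),(1,0),(1,1)). -/
def toPair (M : Matrix (Fin 4) (Fin 4) ℂ) : Mat 2 2 :=
  Matrix.of fun p q => M (idx4 p) (idx4 q)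

set_option maxRecDepth 8000 in
lemma psd2 (A : Matrix (Fin 2) (Fin 2) ℂ) (hA : A.PosSemidef) :
    0 ≤ (A 0 0).re ∧ 0 ≤ (A 1 1).re ∧ ((A 0 1).re)^2 ≤ (A 0 0).re * (A 1 1).re ∧
    A 0 0 = ((A 0 0).re : ℂ) ∧ A 1 1 = ((A 1 1).re : ℂ) ∧ A 1 0 = (starRingEnd ℂ) (A 0 1) := by
  have herm := hA.1
  have h10 : A 1 0 = (starRingEnd ℂ) (A 0 1) := by
    have := congrFun (congrFun herm 1) 0
    simpa [Matrix.conjTranspose_apply] using this.symm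
  have h00 : A 0 0 = ((A 0 0).re : ℂ) := by
    have := congrFun (congrFun herm 0) 0
    simp [Matrix.conjTranspose_apply] at this
    exact (Complex.conj_eq_iff_re.mp this).symm
  have h11 : A 1 1 = ((A 1 1).re : ℂ) := by
    have := congrFun (congrFun herm 1) 1
    simp [Matrix.conjTranspose_apply] at this
    exact (Complex.conj_eq_iff_re.mp this).symm
  have ha0 : 0 ≤ (A 0 0).re := by
    have := hA.dotProduct_mulVec_nonneg ![1, 0]
    simp [dotProduct, Matrix.mulVec, Fin.sum_univ_two] at this
    exact (Complex.le_def.mp this).1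
  have ha1 : 0 ≤ (A 1 1).re := by
    have := hA.dotProduct_mulVec_nonneg ![0, 1]
    simp [dotProduct, Matrix.mulVec, Fin.sum_univ_two] at this
    exact (Complex.le_def.mp this).1
  have hq : ∀ t : ℝ, 0 ≤ (A 0 0).re * (t * t) + (2 * (A 0 1).re) * t + (A 1 1).re := by
    intro t
    have := hA.dotProduct_mulVec_nonneg ![(t : ℂ), 1]
    have h := (Complex.le_def.mp this).1
    simp only [dotProduct, Matrix.mulVec, Fin.sum_univ_two, Matrix.cons_val_zero,
      Matrix.cons_val_one, Matrix.head_cons, Pi.star_apply, star_one, RCLike.star_def,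
      Complex.add_re, Complex.mul_re, Complex.one_re, Complex.one_im, Complex.ofReal_re,
      Complex.ofReal_im, Complex.conj_re, Complex.conj_im, neg_zero, zero_mul, mul_zero,
      sub_zero, mul_one, Complex.zero_re, h10] at h
    linarith [h]
  have hd := discrim_le_zero hq
  rw [discrim] at hd
  refine ⟨ha0, ha1, by nlinarith, h00, h11, h10⟩

lemma keyineq (a0 a1 b0 b1 x y : ℝ) (ha0 : 0 ≤ a0) (ha1 : 0 ≤ a1) (hb0 : 0 ≤ b0) (hb1 : 0 ≤ b1)
    (hx : x^2 ≤ a0*a1) (hy : y^2 ≤ b0*b1) :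
    2*x*y ≤ a0*b0 + a1*b1 ∧ -(2*x*y) ≤ a0*b1 + a1*b0 := by
  have hxy2 : x^2*y^2 ≤ (a0*a1)*(b0*b1) :=
    mul_le_mul hx hy (sq_nonneg y) (mul_nonneg ha0 ha1)
  have h1 : (2*x*y)^2 ≤ (a0*b0+a1*b1)^2 := by nlinarith [sq_nonneg (a0*b0-a1*b1)]
  have h2 : (2*x*y)^2 ≤ (a0*b1+a1*b0)^2 := by nlinarith [sq_nonneg (a0*b1-a1*b0)]
  have g1 := abs_le_of_sq_le_sq' h1 (by positivity)
  have g2 := abs_le_of_sq_le_sq' h2 (by positivity)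
  exact ⟨g1.2, by linarith [g2.1]⟩

lemma tr1 (A B : Matrix (Fin 2) (Fin 2) ℂ) :
    ((A ⊗ₖ B) * ((toPair ((1/2 : ℂ) •
      !![1, 0, 0, -1; 0, 0, 0, 0; 0, 0, 0, 0; -1, 0, 0, 1])) + ptB (toPair ((1/2 : ℂ) •
      !![1, 0, 0, -1; 0, 0, 0, 0; 0, 0, 0, 0; -1, 0, 0, 1])))).trace
    = A 0 0 * B 0 0 + A 1 1 * B 1 1
      - (1/2) * (A 0 1 + A 1 0) * (B 0 1 + B 1 0) := by
  simp [Matrix.trace, Matrix.diag, Matrix.mul_apply, Fintype.sum_prod_type, Fin.sum_univ_two,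
    toPair, ptB, idx4]
  ring

lemma tr2 (A B : Matrix (Fin 2) (Fin 2) ℂ) :
    ((A ⊗ₖ B) * ((toPair ((1/2 : ℂ) •
      !![0, 0, 0, 0; 0, 1, 1, 0; 0, 1, 1, 0; 0, 0, 0, 0])) + ptB (toPair ((1/2 : ℂ) •
      !![0, 0, 0, 0; 0, 1, 1, 0; 0, 1, 1, 0; 0, 0, 0, 0])))).trace
    = A 0 0 * B 1 1 + A 1 1 * B 0 0
      + (1/2) * (A 0 1 + A 1 0) * (B 0 1 + B 1 0) := by
  simp [Matrix.trace, Matrix.diag, Matrix.mul_apply, Fintype.sum_prod_type, Fin.sum_univ_two,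
    toPair, ptB, idx4]
  ring

lemma herm1 : ((toPair ((1/2 : ℂ) •
      !![1, 0, 0, -1; 0, 0, 0, 0; 0, 0, 0, 0; -1, 0, 0, 1])) + ptB (toPair ((1/2 : ℂ) •
      !![1, 0, 0, -1; 0, 0, 0, 0; 0, 0, 0, 0; -1, 0, 0, 1]))).IsHermitian := by
  ext ⟨a, b⟩ ⟨c, d⟩
  fin_cases a <;> fin_cases b <;> fin_cases c <;> fin_cases d <;>
    simp [Matrix.conjTranspose_apply, toPair, ptB, idx4, Matrix.vecHead, Matrix.vecTail]

lemma herm2 : ((toPair ((1/2 : ℂ) •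
      !![0, 0, 0, 0; 0, 1, 1, 0; 0, 1, 1, 0; 0, 0, 0, 0])) + ptB (toPair ((1/2 : ℂ) •
      !![0, 0, 0, 0; 0, 1, 1, 0; 0, 1, 1, 0; 0, 0, 0, 0]))).IsHermitian := by
  ext ⟨a, b⟩ ⟨c, d⟩
  fin_cases a <;> fin_cases b <;> fin_cases c <;> fin_cases d <;>
    simp [Matrix.conjTranspose_apply, toPair, ptB, idx4, Matrix.vecHead, Matrix.vecTail]

/-- Example: for `α1 + α2 = 1`, the measurement `{T1 + Γ(T1), T2 + Γ(T2)}` is a SEP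
measurement perfectly discriminating the two non-orthogonal separable pure states. -/
theorem example_measurement (α1 α2 β1 β2 : ℝ)
    (hα1 : α1 ∈ Set.Icc (0:ℝ) 1) (hα2 : α2 ∈ Set.Icc (0:ℝ) 1) (hsum : α1 + α2 = 1)
    (hβ1 : β1 = Real.sqrt (α1 * (1 - α1))) (hβ2 : β2 = Real.sqrt (α2 * (1 - α2)))
    (ρ1 ρ2 : Mat 2 2) (T1 T2 : Mat 2 2)
    (hρ1 : ρ1 = (!![(1:ℂ), 0; 0, 0]) ⊗ₖ (!![(1:ℂ), 0; 0, 0]))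
    (hρ2 : ρ2 = (!![((1 - α1 : ℝ) : ℂ), (β1 : ℝ); (β1 : ℝ), (α1 : ℝ)]) ⊗ₖ
      (!![((1 - α2 : ℝ) : ℂ), (β2 : ℝ); (β2 : ℝ), (α2 : ℝ)]))
    (hT1 : T1 = toPair ((1/2 : ℂ) •
      !![1, 0, 0, -1; 0, 0, 0, 0; 0, 0, 0, 0; -1, 0, 0, 1]))
    (hT2 : T2 = toPair ((1/2 : ℂ) •
      !![0, 0, 0, 0; 0, 1, 1, 0; 0, 1, 1, 0; 0, 0, 0, 0])) :
    (T1 + ptB T1) + (T2 + ptB T2) = 1 ∧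
    InSEPDual (T1 + ptB T1) ∧ InSEPDual (T2 + ptB T2) ∧
    ((T1 + ptB T1) * ρ1).trace = 1 ∧ ((T2 + ptB T2) * ρ2).trace = 1 ∧
    ((T2 + ptB T2) * ρ1).trace = 0 ∧ ((T1 + ptB T1) * ρ2).trace = 0 := by
  subst hρ1 hρ2 hT1 hT2
  have hb : β1 * β2 = α1 * α2 := by
    have h1 : (1 : ℝ) - α1 = α2 := by linarith
    have h2 : (1 : ℝ) - α2 = α1 := by linarith
    rw [hβ1, hβ2, h1, h2, mul_comm α2 α1, Real.mul_self_sqrt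
      (mul_nonneg hα1.1 hα2.1)]
  have hbC : (β1 : ℂ) * (β2 : ℂ) = (α1 : ℂ) * (α2 : ℂ) := by exact_mod_cast hb
  have hsC : (α1 : ℂ) + (α2 : ℂ) = 1 := by exact_mod_cast hsum
  refine ⟨?_, ⟨herm1, ?_⟩, ⟨herm2, ?_⟩, ?_, ?_, ?_, ?_⟩
  · ext ⟨a, b⟩ ⟨c, d⟩
    fin_cases a <;> fin_cases b <;> fin_cases c <;> fin_cases d <;>
      simp [toPair, ptB, idx4, Matrix.one_apply, Matrix.vecHead, Matrix.vecTail,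
        Prod.ext_iff] <;> norm_num
  · intro A B hA hB
    obtain ⟨ha0, ha1, hax, hA00, hA11, hA10⟩ := psd2 A hA
    obtain ⟨hb0, hb1, hbx, hB00, hB11, hB10⟩ := psd2 B hB
    have key := (keyineq _ _ _ _ _ _ ha0 ha1 hb0 hb1 hax hbx).1
    have heq : ((A ⊗ₖ B) * ((toPair ((1/2 : ℂ) •
          !![1, 0, 0, -1; 0, 0, 0, 0; 0, 0, 0, 0; -1, 0, 0, 1])) + ptB (toPair ((1/2 : ℂ) •
          !![1, 0, 0, -1; 0, 0, 0, 0; 0, 0, 0, 0; -1, 0, 0, 1])))).trace =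
        (((A 0 0).re * (B 0 0).re + (A 1 1).re * (B 1 1).re
          - 2 * (A 0 1).re * (B 0 1).re : ℝ) : ℂ) := by
      rw [tr1, hA00, hA11, hA10, hB00, hB11, hB10, Complex.add_conj, Complex.add_conj]
      push_cast [Complex.ofReal_re]
      ring
    rw [heq, Complex.zero_le_real]
    linarith
  · intro A B hA hB
    obtain ⟨ha0, ha1, hax, hA00, hA11, hA10⟩ := psd2 A hA
    obtain ⟨hb0, hb1, hbx, hB00, hB11, hB10⟩ := psd2 B hB
    have key := (keyineq _ _ _ _ _ _ ha0 ha1 hb0 hb1 hax hbx).2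
    have heq : ((A ⊗ₖ B) * ((toPair ((1/2 : ℂ) •
          !![0, 0, 0, 0; 0, 1, 1, 0; 0, 1, 1, 0; 0, 0, 0, 0])) + ptB (toPair ((1/2 : ℂ) •
          !![0, 0, 0, 0; 0, 1, 1, 0; 0, 1, 1, 0; 0, 0, 0, 0])))).trace =
        (((A 0 0).re * (B 1 1).re + (A 1 1).re * (B 0 0).re
          + 2 * (A 0 1).re * (B 0 1).re : ℝ) : ℂ) := by
      rw [tr2, hA00, hA11, hA10, hB00, hB11, hB10, Complex.add_conj, Complex.add_conj]
      push_cast [Complex.ofReal_re]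
      ring
    rw [heq, Complex.zero_le_real]
    linarith
  · rw [Matrix.trace_mul_comm, tr1]
    norm_num
  · rw [Matrix.trace_mul_comm, tr2]
    norm_num
    linear_combination (2:ℂ) * hbC + hsC
  · rw [Matrix.trace_mul_comm, tr2]
    norm_num
  · rw [Matrix.trace_mul_comm, tr1]
    norm_num
    linear_combination (-2:ℂ) * hbC - hsC

end
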